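/- Let y, z, k ∈ ℕ with k > 16 and k > yz. Suppose Σ := 8(z² + k)/(k − 16) is an integer, Σ' := y²Σ/k is an integer, and x := √(k(Σ + Σ')/8) is an integer. If moreover Σ'/Σ = u/v in lowest terms with u odd and v even with even 2-adic order, then (Σ, Σ') = (40, 10). -/

import Mathlib

private lemma no_sq_between {r n : ℕ} (h1 : r * r < n) (h2 : n < (r + 1) * (r + 1)) :
    ¬ IsSquare n := by
  rintro ⟨c, rfl⟩
  rcases le_or_gt c r with h | h
  · exact absurd (Nat.mul_le_mul h h) (by omega)
  · have : r + 1 ≤ c := h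
    exact absurd (Nat.mul_le_mul this this) (by omega)

private lemma sq_mod3 (n : ℕ) : n * n % 3 = 0 ∨ n * n % 3 = 1 := by
  have h2 : n * n % 3 = (n % 3) * (n % 3) % 3 := Nat.mul_mod n n 3
  have h : n % 3 < 3 := Nat.mod_lt _ (by norm_num)
  interval_cases hn : n % 3 <;> omega

private lemma sq_helper {c n z : ℕ} (hc : c ≠ 0) (h : (c * c) * n = z * z) : IsSquare n := by
  have hdvd : c ∣ z := by
    have : c ^ 2 ∣ z ^ 2 := ⟨n, by rw [pow_two, pow_two]; exact h.symm⟩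
    exact (Nat.pow_dvd_pow_iff two_ne_zero).1 this
  obtain ⟨w, rfl⟩ := hdvd
  refine ⟨w, ?_⟩
  have h2 : (c * c) * n = (c * c) * (w * w) := by rw [h]; ring
  have hcc : 0 < c * c := Nat.pos_of_ne_zero (by positivity)
  exact Nat.eq_of_mul_eq_mul_left hcc h2

private lemma cop_split {m n c : ℕ} (h : Nat.Coprime m n) (heq : m * n = c * c) :
    IsSquare m ∧ IsSquare n := by
  have h1 : IsUnit (gcd m n) := by
    rw [Nat.isUnit_iff]
    exact h
  have h2 : IsUnit (gcd n m) := by rwa [gcd_comm]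
  have heq' : m * n = c ^ 2 := by rw [pow_two]; exact heq
  obtain ⟨d, hd⟩ := exists_eq_pow_of_mul_eq_pow h1 heq'
  obtain ⟨e, he⟩ := exists_eq_pow_of_mul_eq_pow h2 (by rwa [mul_comm] at heq')
  exact ⟨⟨d, by rw [hd]; ring⟩, ⟨e, by rw [he]; ring⟩⟩

private lemma pell_kill {β ν : ℕ} (hβ : 0 < β) (h : ν * ν = 4 * (β * β) + 1) : False := by
  have h1 : 2 * β < ν := by nlinarith
  have h2 : 2 * β + 1 ≤ ν := h1
  nlinarith [Nat.mul_le_mul h2 h2]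

private lemma val2_2 : padicValNat 2 2 = 1 := padicValNat.self one_lt_two

private lemma val2_6 : padicValNat 2 6 = 1 := by
  haveI : Fact (Nat.Prime 2) := ⟨Nat.prime_two⟩
  have : (6 : ℕ) = 2 * 3 := by norm_num
  rw [this, padicValNat.mul (by norm_num) (by norm_num), val2_2,
    padicValNat.eq_zero_of_not_dvd (by norm_num)]

private lemma val2_8 : padicValNat 2 8 = 3 := by
  have : (8 : ℕ) = 2 ^ 3 := by norm_num
  rw [this, padicValNat.prime_pow]

set_option maxHeartbeats 1000000

/-- Case 1 of the number-theoretic theorem: with `k > 16`, `k > yz`,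
`Σ = 8(z² + k)/(k - 16)` an integer, `Σ' = y²Σ/k` an integer,
`x = √(k(Σ + Σ')/8)` an integer, and `Σ'/Σ = u/v` in lowest terms with `u` odd and
`v` even of even 2-adic order, then `(Σ, Σ') = (40, 10)`. -/
theorem stmt12 (y z k S S' x u v : ℕ)
    (hy : 0 < y) (hz : 0 < z) (hk : 16 < k) (hkyz : y * z < k)
    (hS : S * (k - 16) = 8 * (z ^ 2 + k))
    (hS' : S' * k = y ^ 2 * S)
    (hx : 8 * x ^ 2 = k * (S + S'))
    (hu : 0 < u) (hv : 0 < v) (hgcd : Nat.gcd u v = 1)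
    (hratio : S' * v = S * u)
    (huodd : Odd u) (hveven : Even v) (hval : Even (padicValNat 2 v)) :
    S = 40 ∧ S' = 10 := by
  haveI : Fact (Nat.Prime 2) := ⟨Nat.prime_two⟩
  have hk0 : 0 < k := by omega
  -- positivity of S, S'
  have hS0 : 0 < S := by
    rcases Nat.eq_zero_or_pos S with h | h
    · exfalso; rw [h, zero_mul] at hS
      have : 0 < 8 * (z ^ 2 + k) := by positivity
      omega
    · exact h
  have hS'0 : 0 < S' := by
    rcases Nat.eq_zero_or_pos S' with h | h
    · exfalso; rw [h, zero_mul] at hS'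
      have : 0 < y ^ 2 * S := by positivity
      omega
    · exact h
  have hco : Nat.Coprime u v := hgcd
  -- u * k = y^2 * v
  have huk : u * k = y ^ 2 * v := by
    have h1 : S' * (u * k) = S' * (y ^ 2 * v) := by
      calc S' * (u * k) = u * (S' * k) := by ring
        _ = u * (y ^ 2 * S) := by rw [hS']
        _ = y ^ 2 * (S * u) := by ring
        _ = y ^ 2 * (S' * v) := by rw [hratio]
        _ = S' * (y ^ 2 * v) := by ring
    exact Nat.eq_of_mul_eq_mul_left hS'0 h1
  -- v ∣ k
  have hvk : v ∣ k := by
    have hd : v ∣ k * u := ⟨y ^ 2, by rw [mul_comm k u, huk]; ring⟩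
    exact (hco.symm).dvd_of_dvd_mul_right hd
  obtain ⟨t, hkt⟩ := hvk
  have ht0 : 0 < t := by
    rcases Nat.eq_zero_or_pos t with h | h
    · exfalso; rw [h, mul_zero] at hkt; omega
    · exact h
  -- y^2 = u*t
  have hut : y ^ 2 = u * t := by
    have h1 : v * (u * t) = v * (y ^ 2) := by
      calc v * (u * t) = u * (v * t) := by ring
        _ = u * k := by rw [hkt]
        _ = y ^ 2 * v := huk
        _ = v * y ^ 2 := by ring
    exact (Nat.eq_of_mul_eq_mul_left hv h1).symm
  -- v ∣ S
  have hvS : v ∣ S := by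
    have hd : v ∣ S * u := ⟨S', by rw [← hratio]; ring⟩
    exact (hco.symm).dvd_of_dvd_mul_right hd
  obtain ⟨s, hSs⟩ := hvS
  have hs0 : 0 < s := by
    rcases Nat.eq_zero_or_pos s with h | h
    · exfalso; rw [h, mul_zero] at hSs; omega
    · exact h
  -- S' = s * u
  have hS's : S' = s * u := by
    have h1 : S' * v = (s * u) * v := by rw [hratio, hSs]; ring
    exact Nat.eq_of_mul_eq_mul_right hv h1
  -- v = 4 * V
  have hv2 : 2 ≤ padicValNat 2 v := by
    have h1 : 1 ≤ padicValNat 2 v := one_le_padicValNat_of_dvd hv.ne' hveven.two_dvd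
    rcases hval with ⟨m, hm⟩; omega
  have h4v : (4 : ℕ) ∣ v := by
    have h1 : (2 : ℕ) ^ 2 ∣ 2 ^ padicValNat 2 v := pow_dvd_pow 2 hv2
    have h2 : (2 : ℕ) ^ padicValNat 2 v ∣ v := pow_padicValNat_dvd
    have := h1.trans h2
    norm_num at this
    exact this
  obtain ⟨V, hvV⟩ := h4v
  have hV0 : 0 < V := by
    rcases Nat.eq_zero_or_pos V with h | h
    · exfalso; rw [h, mul_zero] at hvV; omega
    · exact h
  have hVpar : padicValNat 2 V % 2 = 0 := by
    have h1 : padicValNat 2 v = padicValNat 2 4 + padicValNat 2 V := by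
      rw [hvV]; exact padicValNat.mul (by norm_num) (by omega)
    have h2 : padicValNat 2 4 = 2 := by
      have : (4 : ℕ) = 2 ^ 2 := by norm_num
      rw [this, padicValNat.prime_pow]
    rcases hval with ⟨m, hm⟩; omega
  -- gcd u V = 1
  have hguV : Nat.Coprime u V := Nat.Coprime.coprime_dvd_right ⟨4, by rw [hvV]; ring⟩ hco
  -- g, a, b decomposition of u, t
  set g := Nat.gcd u t with hgdef
  have hg0 : 0 < g := Nat.gcd_pos_of_pos_left t hu
  have hgu : g ∣ u := Nat.gcd_dvd_left u t
  have hgt : g ∣ t := Nat.gcd_dvd_right u t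
  have hcop1 : Nat.Coprime (u / g) (t / g) := Nat.coprime_div_gcd_div_gcd hg0
  have hu_div : u = g * (u / g) := (Nat.mul_div_cancel' hgu).symm
  have ht_div : t = g * (t / g) := (Nat.mul_div_cancel' hgt).symm
  have hgy : g ∣ y := by
    have h1 : g ^ 2 ∣ y ^ 2 := ⟨(u / g) * (t / g), by
      rw [hut]; nth_rewrite 1 [hu_div]; nth_rewrite 1 [ht_div]; ring⟩
    exact (Nat.pow_dvd_pow_iff two_ne_zero).1 h1
  obtain ⟨y₁, hy₁⟩ := hgy
  have hy₁sq : (u / g) * (t / g) = y₁ * y₁ := by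
    have h1 : g * g * ((u / g) * (t / g)) = g * g * (y₁ * y₁) := by
      calc g * g * ((u / g) * (t / g)) = (g * (u / g)) * (g * (t / g)) := by ring
        _ = u * t := by rw [← hu_div, ← ht_div]
        _ = y ^ 2 := hut.symm
        _ = (g * y₁) * (g * y₁) := by rw [hy₁, pow_two]
        _ = g * g * (y₁ * y₁) := by ring
    exact Nat.eq_of_mul_eq_mul_left (by positivity) h1
  obtain ⟨hsqa, hsqb⟩ := cop_split hcop1 hy₁sq
  obtain ⟨a, ha⟩ := hsqa
  obtain ⟨b, hb⟩ := hsqb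
  have hu_eq : u = g * (a * a) := by rw [hu_div, ha]
  have ht_eq : t = g * (b * b) := by rw [ht_div, hb]
  have ha0 : 0 < a := by
    rcases Nat.eq_zero_or_pos a with h | h
    · exfalso; rw [h] at hu_eq; simp at hu_eq; omega
    · exact h
  have hb0 : 0 < b := by
    rcases Nat.eq_zero_or_pos b with h | h
    · exfalso; rw [h] at ht_eq; simp at ht_eq; omega
    · exact h
  have hgodd : ¬ (2 ∣ g) := by
    intro h2g
    have : (2 : ℕ) ∣ u := h2g.trans hgu
    rcases huodd with ⟨j, hj⟩
    omega
  -- N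
  set N := u + 4 * V with hNdef
  have hN0 : 0 < N := by positivity
  have hNodd : ¬ (2 ∣ N) := by
    rcases huodd with ⟨j, hj⟩
    omega
  -- key equation for x
  have hxeq : 4 * (2 * x ^ 2) = 4 * (s * (t * (V * N))) := by
    calc 4 * (2 * x ^ 2) = 8 * x ^ 2 := by ring
      _ = k * (S + S') := hx
      _ = (v * t) * (v * s + s * u) := by rw [hkt, hSs, hS's]
      _ = (v * t) * (s * (u + v)) := by ring
      _ = ((4 * V) * t) * (s * (u + 4 * V)) := by rw [hvV]
      _ = 4 * (s * (t * (V * N))) := by rw [hNdef]; ring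
  have hxeq2 : 2 * x ^ 2 = s * (t * (V * N)) := Nat.eq_of_mul_eq_mul_left (by norm_num) hxeq
  have hx0 : 0 < x := by
    rcases Nat.eq_zero_or_pos x with h | h
    · exfalso; rw [h] at hxeq2; simp at hxeq2
      have : 0 < s * (t * (V * N)) := by positivity
      omega
    · exact h
  -- 2-adic valuation: s is even
  have hvals : padicValNat 2 s % 2 = 1 := by
    have hL : padicValNat 2 (2 * x ^ 2) = 1 + 2 * padicValNat 2 x := by
      rw [padicValNat.mul two_ne_zero (by positivity), padicValNat.self one_lt_two,
        padicValNat.pow x 2]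
    have hR : padicValNat 2 (s * (t * (V * N))) =
        padicValNat 2 s + (padicValNat 2 t + (padicValNat 2 V + padicValNat 2 N)) := by
      rw [padicValNat.mul (by omega) (by positivity),
        padicValNat.mul (by omega) (by positivity),
        padicValNat.mul (by omega) (by omega)]
    have hvt : padicValNat 2 t = padicValNat 2 g + 2 * padicValNat 2 b := by
      rw [ht_eq, padicValNat.mul (by omega) (by positivity)]
      congr 1
      have : b * b = b ^ 2 := by ring
      rw [this, padicValNat.pow b 2]
    have hvg : padicValNat 2 g = 0 := padicValNat.eq_zero_of_not_dvd hgodd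
    have hvN : padicValNat 2 N = 0 := padicValNat.eq_zero_of_not_dvd hNodd
    rw [hxeq2] at hL
    rw [hR, hvt, hvg, hvN] at hL
    omega
  have hseven : (2 : ℕ) ∣ s := dvd_of_one_le_padicValNat (by omega)
  obtain ⟨s₁, hs_eq⟩ := hseven
  have hs₁0 : 0 < s₁ := by omega
  have hs1par : padicValNat 2 s₁ % 2 = 0 := by
    have h1 : padicValNat 2 s = padicValNat 2 2 + padicValNat 2 s₁ := by
      rw [hs_eq]; exact padicValNat.mul two_ne_zero (by omega)
    rw [val2_2] at h1
    omega
  -- hE4 : IsSquare (s₁ * (g * (V * N)))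
  have hE4 : IsSquare (s₁ * (g * (V * N))) := by
    have h1 : 2 * ((b * b) * (s₁ * (g * (V * N)))) = 2 * (x * x) := by
      calc 2 * ((b * b) * (s₁ * (g * (V * N)))) = (2 * s₁) * ((g * (b * b)) * (V * N)) := by ring
        _ = s * (t * (V * N)) := by rw [← hs_eq, ← ht_eq]
        _ = 2 * x ^ 2 := hxeq2.symm
        _ = 2 * (x * x) := by ring
    exact sq_helper (c := b) (by omega) (Nat.eq_of_mul_eq_mul_left two_pos h1)
  -- coprimality facts
  have hcop_gV : Nat.Coprime g V := Nat.Coprime.coprime_dvd_left hgu hguV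
  have hcop_VN : Nat.Coprime V N := by
    have h1 : Nat.Coprime V u := hguV.symm
    have h2 : N = u + V * 4 := by rw [hNdef]; ring
    rw [h2]
    exact (Nat.coprime_add_mul_left_right V u 4).mpr h1
  have hcop_gN : Nat.Coprime g N := by
    have hg2 : Nat.Coprime g 2 := by
      rw [Nat.coprime_comm]
      exact (Nat.Prime.coprime_iff_not_dvd Nat.prime_two).mpr hgodd
    have hg4V : Nat.Coprime g (2 * (2 * V)) :=
      hg2.mul_right (hg2.mul_right hcop_gV)
    have hd : Nat.gcd g N ∣ 1 := by
      have d1 : Nat.gcd g N ∣ g := Nat.gcd_dvd_left _ _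
      have d2 : Nat.gcd g N ∣ N := Nat.gcd_dvd_right _ _
      have d3 : Nat.gcd g N ∣ u := d1.trans hgu
      have d5 : Nat.gcd g N ∣ u + 2 * (2 * V) := by
        have e : N = u + 2 * (2 * V) := by rw [hNdef]; ring
        rw [← e]
        exact d2
      have d4 : Nat.gcd g N ∣ 2 * (2 * V) := (Nat.dvd_add_right d3).mp d5
      have := Nat.dvd_gcd d1 d4
      rwa [hg4V] at this
    exact Nat.dvd_one.mp hd
  -- main equation: z = 2*z₁ and E1
  obtain ⟨C, hC⟩ : ∃ C, V * t = C := ⟨_, rfl⟩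
  have hk4 : k = 4 * C := by rw [hkt, hvV, ← hC]; ring
  have hC5 : 5 ≤ C := by omega
  obtain ⟨D, hD⟩ : ∃ D, C = D + 4 := ⟨C - 4, by omega⟩
  have hk16 : k - 16 = 4 * D := by omega
  have hSK : ((4 * V) * (2 * s₁)) * (4 * D) = 8 * (z ^ 2 + 4 * C) := by
    rw [← hvV, ← hs_eq, ← hSs, ← hk16, ← hk4]
    exact hS
  obtain ⟨M, hM⟩ : ∃ M, V * (s₁ * D) = M := ⟨_, rfl⟩
  have h32 : 32 * M = 8 * z ^ 2 + 32 * C := by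
    have e : 32 * (V * (s₁ * D)) = ((4 * V) * (2 * s₁)) * (4 * D) := by ring
    rw [← hM, e, hSK]; ring
  have h2z : 2 ∣ z := by
    have h4w : (2 : ℕ) ^ 2 ∣ z ^ 2 := by
      obtain ⟨w, hw⟩ : ∃ w, z ^ 2 = w := ⟨_, rfl⟩
      rw [hw] at h32 ⊢
      have : (4 : ℕ) ∣ w := by omega
      simpa using this
    exact (Nat.pow_dvd_pow_iff two_ne_zero).1 h4w
  obtain ⟨z₁, hz₁⟩ := h2z
  have hz₁0 : 0 < z₁ := by omega
  have hE1c : z₁ ^ 2 + C = M := by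
    have hzz : z ^ 2 = 4 * z₁ ^ 2 := by rw [hz₁]; ring
    rw [hzz] at h32
    obtain ⟨w1, hw1⟩ : ∃ w1, z₁ ^ 2 = w1 := ⟨_, rfl⟩
    rw [hw1] at h32 ⊢
    omega
  have hE1 : z₁ ^ 2 + V * t + 4 * (s₁ * V) = s₁ * (V * (V * t)) := by
    rw [hC]
    have e1 : s₁ * (V * C) = V * (s₁ * D) + 4 * (s₁ * V) := by rw [hD]; ring
    rw [e1, hM]
    linarith [hE1c]
  have hE2 : u * z₁ ^ 2 < 4 * (V * (V * t)) := by
    have hA : (y * z) ^ 2 < k ^ 2 := Nat.pow_lt_pow_left hkyz two_ne_zero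
    have e1 : (y * z) ^ 2 = (4 * t) * (u * z₁ ^ 2) := by
      rw [mul_pow, hut, hz₁]; ring
    have e2 : k ^ 2 = (4 * t) * (4 * (V * (V * t))) := by rw [hk4, ← hC]; ring
    rw [e1, e2] at hA
    exact Nat.lt_of_mul_lt_mul_left hA
  have hstar : u * (s₁ * (V * t)) < 4 * (V * t) + u * t + 4 * (u * s₁) := by
    have h5 : u * (z₁ ^ 2 + V * t + 4 * (s₁ * V)) = u * (s₁ * (V * (V * t))) := by rw [hE1]
    have h6 : V * (u * (s₁ * (V * t))) < V * (4 * (V * t) + u * t + 4 * (u * s₁)) := by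
      have e3 : V * (u * (s₁ * (V * t))) = u * (s₁ * (V * (V * t))) := by ring
      have e4 : u * (s₁ * (V * (V * t))) = u * z₁ ^ 2 + u * (V * t) + 4 * (u * s₁) * V := by
        rw [← h5]; ring
      have e5 : V * (4 * (V * t) + u * t + 4 * (u * s₁)) =
          4 * (V * (V * t)) + u * (V * t) + 4 * (u * s₁) * V := by ring
      rw [e3, e4, e5]
      linarith [hE2]
    exact Nat.lt_of_mul_lt_mul_left h6
  have hVt5 : 5 ≤ V * t := by rw [hC]; exact hC5
  clear_value g N
  clear hS hS' hx hratio hgcd hco huk hkt hut hkyz hxeq hxeq2 hvals hveven hval hv2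
  clear hSK h32 hE1c hk16 hk4 hC5 hz₁ hy₁sq hu_div ht_div hcop1 hgu hgt hgdef
  clear hM hD hC hy hz hk hk0 hx0 ha hb
  rcases le_or_gt (V * t) 7 with hVt7 | hVt8
  · -- small case: V*t ∈ {5,6,7}
    exfalso
    have hV7 : V ≤ 7 := le_trans (Nat.le_mul_of_pos_right V ht0) hVt7
    have ht7 : t ≤ 7 := le_trans (Nat.le_mul_of_pos_left t hV0) hVt7
    interval_cases V <;> interval_cases t <;> try omega
    -- remaining: (V,t) = (1,5),(1,6),(1,7),(2,3),(3,2),(5,1),(6,1),(7,1)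
    · -- (V,t) = (1,5)
      have h1 : b * b ≤ 5 := by
        linarith only [Nat.le_mul_of_pos_left (b * b) hg0, ht_eq]
      have hb2 : b ≤ 2 := by nlinarith only [h1]
      interval_cases b
      · -- b = 1 : g = 5, u = 5*(a*a)
        have hg5 : g = 5 := by omega
        rw [hg5] at hu_eq
        have hs₁eq : s₁ = z₁ ^ 2 + 5 := by
          obtain ⟨w1, hw1⟩ : ∃ w1, z₁ ^ 2 = w1 := ⟨_, rfl⟩
          rw [hw1] at hE1 ⊢
          omega
        have h3 : u * s₁ = u * z₁ ^ 2 + 5 * u := by rw [hs₁eq]; ring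
        have h4 : 1 ≤ a * a := Nat.one_le_iff_ne_zero.mpr (by positivity)
        have h5 : 5 ≤ u := by rw [hu_eq]; linarith only [h4]
        have h6 : 5 * z₁ ^ 2 ≤ u * z₁ ^ 2 := Nat.mul_le_mul_right _ h5
        have hstar' : u * (s₁ * (1 * 5)) = 5 * (u * s₁) := by ring
        rw [hstar'] at hstar
        have h7 : z₁ ^ 2 ≤ 3 := by linarith only [hstar, h3, h6]
        have h8 : z₁ = 1 := by nlinarith only [h7, hz₁0]
        rw [h8] at hs₁eq; norm_num at hs₁eq
        rw [hs₁eq] at hs1par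
        rw [val2_6] at hs1par
        omega
      · -- b = 2 : 5 = g*4 impossible
        omega
    · -- (V,t) = (1,6): t = 6 forces g even
      have h1 : b * b ≤ 6 := by
        linarith only [Nat.le_mul_of_pos_left (b * b) hg0, ht_eq]
      have hb2 : b ≤ 2 := by nlinarith only [h1]
      interval_cases b <;> omega
    · -- (V,t) = (1,7): g = 7, u = 7*(a*a)
      have h1 : b * b ≤ 7 := by
        linarith only [Nat.le_mul_of_pos_left (b * b) hg0, ht_eq]
      have hb2 : b ≤ 2 := by nlinarith only [h1]
      interval_cases b
      · have hg7 : g = 7 := by omega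
        rw [hg7] at hu_eq
        have hs₁eq : z₁ ^ 2 + 7 = 3 * s₁ := by
          obtain ⟨w1, hw1⟩ : ∃ w1, z₁ ^ 2 = w1 := ⟨_, rfl⟩
          rw [hw1] at hE1 ⊢
          omega
        have h3 : 3 * (u * s₁) = u * z₁ ^ 2 + 7 * u := by
          have e : u * (z₁ ^ 2 + 7) = u * (3 * s₁) := by rw [hs₁eq]
          have e2 : u * (z₁ ^ 2 + 7) = u * z₁ ^ 2 + 7 * u := by ring
          have e3 : u * (3 * s₁) = 3 * (u * s₁) := by ring
          linarith only [e, e2, e3]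
        have h4 : 1 ≤ a * a := Nat.one_le_iff_ne_zero.mpr (by positivity)
        have h5 : 7 ≤ u := by rw [hu_eq]; linarith only [h4]
        have h6 : 7 * z₁ ^ 2 ≤ u * z₁ ^ 2 := Nat.mul_le_mul_right _ h5
        have hstar' : u * (s₁ * (1 * 7)) = 7 * (u * s₁) := by ring
        rw [hstar'] at hstar
        have h7 : z₁ ^ 2 ≤ 3 := by linarith only [hstar, h3, h6]
        have h8 : z₁ = 1 := by nlinarith only [h7, hz₁0]
        rw [h8] at hs₁eq
        omega
      · omega
    · -- (V,t) = (2,3): V = 2 parity kill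
      rw [val2_2] at hVpar; omega
    · -- (V,t) = (3,2): t = 2 forces g even
      have h1 : b * b ≤ 2 := by
        linarith only [Nat.le_mul_of_pos_left (b * b) hg0, ht_eq]
      have hb2 : b ≤ 1 := by nlinarith only [h1]
      interval_cases b <;> omega
    · -- (V,t) = (5,1): g = 1, b = 1, u = a*a
      have hg1 : g = 1 := Nat.dvd_one.mp ⟨b * b, ht_eq⟩
      have hzq : z₁ ^ 2 + 5 = 5 * s₁ := by
        obtain ⟨w1, hw1⟩ : ∃ w1, z₁ ^ 2 = w1 := ⟨_, rfl⟩
        rw [hw1] at hE1 ⊢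
        omega
      have h5z : 5 ∣ z₁ := by
        have h1 : (5 : ℕ) ∣ z₁ * z₁ := by
          have e : z₁ ^ 2 = z₁ * z₁ := by ring
          omega
        rcases (Nat.Prime.dvd_mul (by norm_num)).mp h1 with h | h <;> exact h
      obtain ⟨ζ, hζ⟩ := h5z
      have hζ0 : 0 < ζ := by omega
      have hs₁ζ : s₁ = 5 * (ζ * ζ) + 1 := by
        have e : z₁ ^ 2 = 25 * (ζ * ζ) := by rw [hζ]; ring
        obtain ⟨w1, hw1⟩ : ∃ w1, ζ * ζ = w1 := ⟨_, rfl⟩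
        rw [hw1] at e ⊢
        omega
      have h3 : u * s₁ = 5 * (u * (ζ * ζ)) + u := by rw [hs₁ζ]; ring
      have h4 : ζ * ζ ≤ u * (ζ * ζ) := Nat.le_mul_of_pos_left _ hu
      have hstar' : u * (s₁ * (5 * 1)) = 5 * (u * s₁) := by ring
      rw [hstar'] at hstar
      have h7 : u * (ζ * ζ) ≤ 3 := by linarith only [hstar, h3]
      have h8 : ζ = 1 := by nlinarith only [h7, h4, hζ0]
      rw [h8] at hs₁ζ; norm_num at hs₁ζ
      rw [hs₁ζ] at hs1par
      rw [val2_6] at hs1par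
      omega
    · -- (V,t) = (6,1): V = 6 parity kill
      rw [val2_6] at hVpar; omega
    · -- (V,t) = (7,1): mod 3 kill
      have hzq : z₁ ^ 2 + 7 = 21 * s₁ := by
        obtain ⟨w1, hw1⟩ : ∃ w1, z₁ ^ 2 = w1 := ⟨_, rfl⟩
        rw [hw1] at hE1 ⊢
        omega
      have h7z : 7 ∣ z₁ := by
        have h1 : (7 : ℕ) ∣ z₁ * z₁ := by
          have e : z₁ ^ 2 = z₁ * z₁ := by ring
          omega
        rcases (Nat.Prime.dvd_mul (by norm_num)).mp h1 with h | h <;> exact h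
      obtain ⟨ζ, hζ⟩ := h7z
      have hkey : 7 * (ζ * ζ) + 1 = 3 * s₁ := by
        have e : z₁ ^ 2 = 49 * (ζ * ζ) := by rw [hζ]; ring
        obtain ⟨w1, hw1⟩ : ∃ w1, ζ * ζ = w1 := ⟨_, rfl⟩
        rw [hw1] at e ⊢
        omega
      have hm3 := sq_mod3 ζ
      obtain ⟨w1, hw1⟩ : ∃ w1, ζ * ζ = w1 := ⟨_, rfl⟩
      rw [hw1] at hkey hm3
      omega
  · -- main case: V*t ≥ 8
    have hB : u * (s₁ * V) < 8 * V + 2 * u := by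
      have h8b : 8 * (u * s₁) ≤ u * (s₁ * (V * t)) := by
        have e1 : (u * s₁) * 8 ≤ (u * s₁) * (V * t) := Nat.mul_le_mul_left _ hVt8
        have e2 : (u * s₁) * (V * t) = u * (s₁ * (V * t)) := by ring
        linarith only [e1, e2]
      have h8c : u * (s₁ * (V * t)) < 8 * (V * t) + 2 * (u * t) := by
        linarith only [hstar, h8b]
      have h8d : t * (u * (s₁ * V)) < t * (8 * V + 2 * u) := by
        have e1 : t * (u * (s₁ * V)) = u * (s₁ * (V * t)) := by ring
        have e2 : t * (8 * V + 2 * u) = 8 * (V * t) + 2 * (u * t) := by ring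
        rw [e1, e2]; exact h8c
      exact Nat.lt_of_mul_lt_mul_left h8d
    have hs₁9 : s₁ ≤ 9 := by
      have e1 : 8 * V ≤ (8 * V) * u := Nat.le_mul_of_pos_right _ hu
      have e2 : 2 * u ≤ (2 * u) * V := Nat.le_mul_of_pos_right _ hV0
      have h9 : (u * V) * s₁ < (u * V) * 10 := by
        have r1 : (u * V) * s₁ = u * (s₁ * V) := by ring
        have r2 : (8 * V) * u + (2 * u) * V = (u * V) * 10 := by ring
        linarith only [hB, e1, e2, r1, r2]
      have := Nat.lt_of_mul_lt_mul_left h9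
      omega
    interval_cases s₁
    · -- s₁ = 1
      exfalso
      -- V ≥ 3
      have hV2 : 2 ≤ V := by
        by_contra hc
        have hV1 : V = 1 := by omega
        rw [hV1] at hE1
        obtain ⟨w1, hw1⟩ : ∃ w1, z₁ ^ 2 = w1 := ⟨_, rfl⟩
        rw [hw1] at hE1
        omega
      have hV3 : 3 ≤ V := by
        rcases (by omega : V = 2 ∨ 3 ≤ V) with h | h
        · rw [h, val2_2] at hVpar; omega
        · exact h
      -- splits: g, V, N all squares
      obtain ⟨c0, hc0⟩ := hE4
      have hgVN : g * (V * N) = c0 * c0 := by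
        have e : 1 * (g * (V * N)) = g * (V * N) := by ring
        rw [e] at hc0
        exact hc0
      obtain ⟨hsq_g, hsq_VN⟩ := cop_split (hcop_gV.mul_right hcop_gN) hgVN
      obtain ⟨γ, hγ⟩ := hsq_g
      obtain ⟨c1, hc1⟩ := hsq_VN
      obtain ⟨hsq_V, hsq_N⟩ := cop_split hcop_VN hc1
      obtain ⟨β, hβ⟩ := hsq_V
      obtain ⟨ν, hν⟩ := hsq_N
      have hβ0 : 0 < β := by
        rcases Nat.eq_zero_or_pos β with h | h
        · rw [h] at hβ; simp at hβ; omega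
        · exact h
      obtain ⟨μ, hμ⟩ : ∃ μ, γ * a = μ := ⟨_, rfl⟩
      have hu_sq : u = μ * μ := by rw [hu_eq, hγ, ← hμ]; ring
      have hμodd : μ % 2 = 1 := by
        rcases Nat.even_or_odd μ with he | ho
        · exfalso
          have : Even u := by rw [hu_sq]; exact he.mul_right _
          exact (Nat.not_odd_iff_even.mpr this) huodd
        · exact Nat.odd_iff.mp ho
      have hμcase : μ = 1 ∨ μ = 3 ∨ 5 ≤ μ := by omega
      rcases hμcase with hμ1 | hμ3 | hμ5
      · -- u = 1 : Pell kill
        have hu1 : u = 1 := by rw [hu_sq, hμ1]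
        exact pell_kill hβ0 (by rw [← hν, hNdef, hu1, hβ]; ring)
      · -- u = 9
        have hu9 : u = 9 := by rw [hu_sq, hμ3]
        have hV17 : V ≤ 17 := by
          rw [hu9] at hB
          have f2 : 9 * (1 * V) = 9 * V := by ring
          rw [f2] at hB
          omega
        have hβ2 : 2 ≤ β := by nlinarith only [hβ, hV3]
        have hβ4 : β ≤ 4 := by nlinarith only [hβ, hV17]
        interval_cases β
        · -- V = 4 : mod 3 kill from E1
          have hV4 : V = 4 := by rw [hβ]
          rw [hV4] at hE1
          have hm3 := sq_mod3 z₁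
          have e : z₁ ^ 2 = z₁ * z₁ := by ring
          obtain ⟨w1, hw1⟩ : ∃ w1, z₁ * z₁ = w1 := ⟨_, rfl⟩
          rw [e, hw1] at hE1
          rw [hw1] at hm3
          omega
        · -- V = 9 : gcd(9,9) ≠ 1
          have hV9 : V = 9 := by rw [hβ]
          rw [hu9, hV9] at hguV
          exact absurd hguV (by decide)
        · -- V = 16 : N = 73 not a square
          have hV16 : V = 16 := by rw [hβ]
          have h73 : 73 = ν * ν := by rw [← hν, hNdef, hu9, hV16]
          rcases (by omega : ν ≤ 8 ∨ 9 ≤ ν) with h | h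
          · have := Nat.mul_le_mul h h; omega
          · have := Nat.mul_le_mul h h; omega
      · -- u ≥ 25 : contradiction with hB
        have hu25 : 25 ≤ u := by rw [hu_sq]; nlinarith only [hμ5]
        have e1 : u * (1 * V) = u * V := by ring
        rw [e1] at hB
        have f1 : 25 * V ≤ u * V := Nat.mul_le_mul_right V hu25
        have f2 : u * 3 ≤ u * V := Nat.mul_le_mul_left u hV3
        linarith only [hB, f1, f2, hV3, hu25]
    · -- s₁ = 2
      rw [val2_2] at hs1par; omega
    · -- s₁ = 3
      exfalso
      have hu8 : u ≤ 8 := by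
        by_contra hc
        push_neg at hc
        have f1 : 9 * (3 * V) ≤ u * (3 * V) := Nat.mul_le_mul_right _ (by omega)
        have f2 : u * 3 ≤ u * (3 * V) := Nat.mul_le_mul_left u (by linarith only [hV0])
        linarith only [hB, f1, f2, hu, hV0]
      have hucase : u = 1 ∨ u = 3 ∨ u = 5 ∨ u = 7 := by
        rcases huodd with ⟨j, hj⟩; omega
      rcases hucase with hu1 | hu3 | hu5 | hu7
      · -- u = 1
        subst hu1
        have hg1 : g = 1 := Nat.dvd_one.mp ⟨a * a, hu_eq⟩
        have htb : t = b * b := by rw [ht_eq, hg1, one_mul]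
        rw [hg1, hNdef] at hE4
        obtain ⟨c0, hc0⟩ := hE4
        have hcopVN' : Nat.Coprime V (1 + 4 * V) := by
          have h := hcop_VN; rwa [hNdef] at h
        by_cases h3V : 3 ∣ V
        · -- 3 ∣ V
          have hcop3N : Nat.Coprime 3 (1 + 4 * V) := by
            rw [Nat.Prime.coprime_iff_not_dvd Nat.prime_three]
            obtain ⟨V', rfl⟩ := h3V
            omega
          have hcop : Nat.Coprime (3 * V) (1 + 4 * V) := Nat.Coprime.mul hcop3N hcopVN'
          have h3VN : (3 * V) * (1 + 4 * V) = c0 * c0 := by rw [← hc0]; ring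
          obtain ⟨hsq3V, _⟩ := cop_split hcop h3VN
          obtain ⟨p, hp⟩ := hsq3V
          have h3p : 3 ∣ p := by
            have h1 : (3 : ℕ) ∣ p * p := ⟨V, hp.symm⟩
            rcases (Nat.Prime.dvd_mul Nat.prime_three).mp h1 with h | h <;> exact h
          obtain ⟨p₁, rfl⟩ := h3p
          have hVp : V = 3 * (p₁ * p₁) := by
            have e : 3 * p₁ * (3 * p₁) = 9 * (p₁ * p₁) := by ring
            rw [e] at hp
            obtain ⟨P, hP⟩ : ∃ P, p₁ * p₁ = P := ⟨_, rfl⟩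
            rw [hP] at hp ⊢
            omega
          have hp₁0 : 0 < p₁ := by
            rcases Nat.eq_zero_or_pos p₁ with h | h
            · rw [h] at hVp; simp at hVp; omega
            · exact h
          rw [hVp, htb] at hE1
          have key : z₁ ^ 2 + (3 * (p₁ * p₁)) * ((b * b) + 12) =
              (3 * (p₁ * p₁)) * (9 * ((p₁ * p₁) * (b * b))) := by
            ring_nf
            ring_nf at hE1
            linarith only [hE1]
          have hle : (b * b) + 12 ≤ 9 * ((p₁ * p₁) * (b * b)) := by
            have h1 : (3 * (p₁ * p₁)) * ((b * b) + 12) ≤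
                (3 * (p₁ * p₁)) * (9 * ((p₁ * p₁) * (b * b))) := by
              linarith only [key, Nat.zero_le (z₁ ^ 2)]
            exact Nat.le_of_mul_le_mul_left h1 (by positivity)
          obtain ⟨X, hX⟩ : ∃ X, 9 * ((p₁ * p₁) * (b * b)) = ((b * b) + 12) + X :=
            ⟨_, (Nat.add_sub_cancel' hle).symm⟩
          have hzX : (p₁ * p₁) * (3 * X) = z₁ * z₁ := by
            have e1 : (3 * (p₁ * p₁)) * (((b * b) + 12) + X) =
                (3 * (p₁ * p₁)) * ((b * b) + 12) + (p₁ * p₁) * (3 * X) := by ring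
            have e2 : z₁ ^ 2 = z₁ * z₁ := by ring
            rw [hX, e1] at key
            linarith only [key, e2]
          obtain ⟨δ, hδ⟩ := sq_helper (by positivity) hzX
          have h3δ : 3 ∣ δ := by
            have h1 : (3 : ℕ) ∣ δ * δ := ⟨X, hδ.symm⟩
            rcases (Nat.Prime.dvd_mul Nat.prime_three).mp h1 with h | h <;> exact h
          obtain ⟨δ₁, rfl⟩ := h3δ
          have hXδ : X = 3 * (δ₁ * δ₁) := by
            have e : 3 * δ₁ * (3 * δ₁) = 9 * (δ₁ * δ₁) := by ring
            rw [e] at hδ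
            obtain ⟨DD, hDD⟩ : ∃ DD, δ₁ * δ₁ = DD := ⟨_, rfl⟩
            rw [hDD] at hδ ⊢
            omega
          rw [hXδ] at hX
          have h3b : 3 ∣ b := by
            have h1 : (3 : ℕ) ∣ b * b := by
              obtain ⟨R, hR⟩ : ∃ R, (p₁ * p₁) * (b * b) = R := ⟨_, rfl⟩
              obtain ⟨DD, hDD⟩ : ∃ DD, δ₁ * δ₁ = DD := ⟨_, rfl⟩
              rw [hR, hDD] at hX
              obtain ⟨BB, hBB⟩ : ∃ BB, b * b = BB := ⟨_, rfl⟩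
              rw [hBB] at hX ⊢
              omega
            rcases (Nat.Prime.dvd_mul Nat.prime_three).mp h1 with h | h <;> exact h
          obtain ⟨b₁, rfl⟩ := h3b
          have e1 : 9 * ((p₁ * p₁) * ((3 * b₁) * (3 * b₁))) = 81 * ((p₁ * p₁) * (b₁ * b₁)) := by
            ring
          have e2 : (3 * b₁) * (3 * b₁) + 12 = 9 * (b₁ * b₁) + 12 := by ring
          rw [e1, e2] at hX
          have hm3 := sq_mod3 δ₁
          obtain ⟨R, hR⟩ : ∃ R, (p₁ * p₁) * (b₁ * b₁) = R := ⟨_, rfl⟩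
          obtain ⟨DD, hDD⟩ : ∃ DD, δ₁ * δ₁ = DD := ⟨_, rfl⟩
          obtain ⟨BB, hBB⟩ : ∃ BB, b₁ * b₁ = BB := ⟨_, rfl⟩
          rw [hR, hDD, hBB] at hX
          rw [hDD] at hm3
          omega
        · -- ¬ 3 ∣ V
          have hcopV3 : Nat.Coprime V 3 :=
            ((Nat.Prime.coprime_iff_not_dvd Nat.prime_three).mpr h3V).symm
          have hcop : Nat.Coprime V (3 * (1 + 4 * V)) := Nat.Coprime.mul_right hcopV3 hcopVN'
          have hVN : V * (3 * (1 + 4 * V)) = c0 * c0 := by rw [← hc0]; ring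
          obtain ⟨hsqV, _⟩ := cop_split hcop hVN
          obtain ⟨β, hβ⟩ := hsqV
          have h3c : 3 ∣ c0 := by
            have h1 : (3 : ℕ) ∣ c0 * c0 := ⟨1 * (V * (1 + 4 * V)), hc0.symm⟩
            rcases (Nat.Prime.dvd_mul Nat.prime_three).mp h1 with h | h <;> exact h
          obtain ⟨c₁, rfl⟩ := h3c
          have h3N : 3 ∣ 1 + 4 * V := by
            have hVN3 : V * (1 + 4 * V) = 3 * (c₁ * c₁) := by
              have e : 3 * c₁ * (3 * c₁) = 9 * (c₁ * c₁) := by ring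
              have e2 : 3 * (1 * (V * (1 + 4 * V))) = 3 * (V * (1 + 4 * V)) := by ring
              rw [e, e2] at hc0
              obtain ⟨CC, hCC⟩ : ∃ CC, c₁ * c₁ = CC := ⟨_, rfl⟩
              obtain ⟨W, hW⟩ : ∃ W, V * (1 + 4 * V) = W := ⟨_, rfl⟩
              rw [hCC, hW] at hc0 ⊢
              omega
            have h1 : (3 : ℕ) ∣ V * (1 + 4 * V) := ⟨c₁ * c₁, hVN3⟩
            rcases (Nat.Prime.dvd_mul Nat.prime_three).mp h1 with h | h
            · exact absurd h h3V
            · exact h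
          have hm3 := sq_mod3 β
          obtain ⟨BB, hBB⟩ : ∃ BB, β * β = BB := ⟨_, rfl⟩
          rw [hBB] at hm3
          rw [hBB] at hβ
          omega
      · -- u = 3
        subst hu3
        have ha1 : a = 1 := by
          have h1 : a * a ≤ 3 := by
            linarith only [Nat.le_mul_of_pos_left (a * a) hg0, hu_eq]
          nlinarith only [h1, ha0]
        have hg3 : g = 3 := by rw [ha1] at hu_eq; omega
        have hV5 : V ≤ 5 := by
          have f2 : 3 * (3 * V) = 9 * V := by ring
          rw [f2] at hB
          omega
        rw [hg3, hNdef] at hE4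
        interval_cases V
        · exact absurd hE4
            (no_sq_between (r := 7) (by norm_num) (by norm_num))
        · rw [val2_2] at hVpar; omega
        · exact absurd hguV (by decide)
        · exact absurd hE4
            (no_sq_between (r := 26) (by norm_num) (by norm_num))
        · exact absurd hE4
            (no_sq_between (r := 32) (by norm_num) (by norm_num))
      · -- u = 5
        subst hu5
        have ha1 : a = 1 := by
          have h1 : a * a ≤ 5 := by
            linarith only [Nat.le_mul_of_pos_left (a * a) hg0, hu_eq]
          have h2 : a ≤ 2 := by nlinarith only [h1]
          interval_cases a
          · rfl
          · omega
        have hg5 : g = 5 := by rw [ha1] at hu_eq; omega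
        have hV1 : V = 1 := by
          have f2 : 5 * (3 * V) = 15 * V := by ring
          rw [f2] at hB
          omega
        rw [hg5, hV1, hNdef, hV1] at hE4
        exact absurd hE4
          (no_sq_between (r := 11) (by norm_num) (by norm_num))
      · -- u = 7
        subst hu7
        have ha1 : a = 1 := by
          have h1 : a * a ≤ 7 := by
            linarith only [Nat.le_mul_of_pos_left (a * a) hg0, hu_eq]
          have h2 : a ≤ 2 := by nlinarith only [h1]
          interval_cases a
          · rfl
          · omega
        have hg7 : g = 7 := by rw [ha1] at hu_eq; omega
        have hV1 : V = 1 := by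
          have f2 : 7 * (3 * V) = 21 * V := by ring
          rw [f2] at hB
          omega
        rw [hg7, hV1, hNdef, hV1] at hE4
        exact absurd hE4
          (no_sq_between (r := 15) (by norm_num) (by norm_num))
    · -- s₁ = 4
      exfalso
      have hucase : u = 1 ∨ u = 3 := by
        by_contra hc
        push_neg at hc
        have h5 : 5 ≤ u := by rcases huodd with ⟨j, hj⟩; omega
        have f1 : 5 * (4 * V) ≤ u * (4 * V) := Nat.mul_le_mul_right _ h5
        have f2 : u * 4 ≤ u * (4 * V) := Nat.mul_le_mul_left u (by linarith only [hV0])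
        linarith only [hB, f1, f2, hu, hV0]
      rcases hucase with hu1 | hu3
      · -- u = 1 : V and 4V+1 both squares, Pell kill
        subst hu1
        have hg1 : g = 1 := Nat.dvd_one.mp ⟨a * a, hu_eq⟩
        rw [hg1, hNdef] at hE4
        obtain ⟨c0, hc0⟩ := hE4
        have h2c : 2 ∣ c0 := by
          have h1 : (2 : ℕ) ∣ c0 * c0 := ⟨2 * (1 * (V * (1 + 4 * V))), by rw [← hc0]; ring⟩
          rcases (Nat.Prime.dvd_mul Nat.prime_two).mp h1 with h | h <;> exact h
        obtain ⟨c₁, rfl⟩ := h2c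
        have hVN : V * (1 + 4 * V) = c₁ * c₁ := by
          have e1 : 2 * c₁ * (2 * c₁) = 4 * (c₁ * c₁) := by ring
          have e2 : 4 * (1 * (V * (1 + 4 * V))) = 4 * (V * (1 + 4 * V)) := by ring
          rw [e1, e2] at hc0
          linarith only [hc0]
        have hcop : Nat.Coprime V (1 + 4 * V) := by
          have := hcop_VN
          rwa [hNdef] at this
        obtain ⟨hsqV, hsqN⟩ := cop_split hcop hVN
        obtain ⟨β, hβ⟩ := hsqV
        obtain ⟨ν, hν⟩ := hsqN
        have hβ0 : 0 < β := by
          rcases Nat.eq_zero_or_pos β with h | h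
          · rw [h] at hβ; simp at hβ; omega
          · exact h
        exact pell_kill hβ0 (by rw [← hν, hβ]; ring)
      · -- u = 3 : V = 1, 84 not square
        subst hu3
        have ha1 : a = 1 := by
          have h1 : a * a ≤ 3 := by
            linarith only [Nat.le_mul_of_pos_left (a * a) hg0, hu_eq]
          nlinarith only [h1, ha0]
        have hg3 : g = 3 := by rw [ha1] at hu_eq; omega
        have hV1 : V = 1 := by
          have f2 : 3 * (4 * V) = 12 * V := by ring
          rw [f2] at hB
          omega
        rw [hg3, hV1, hNdef, hV1] at hE4
        exact absurd hE4 (no_sq_between (r := 9) (by norm_num) (by norm_num))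
    · -- s₁ = 5
      have hu1 : u = 1 := by
        by_contra hc
        have h3 : 3 ≤ u := by rcases huodd with ⟨j, hj⟩; omega
        have f1 : 3 * (5 * V) ≤ u * (5 * V) := Nat.mul_le_mul_right _ h3
        have f2 : u * 5 ≤ u * (5 * V) := Nat.mul_le_mul_left u (by linarith only [hV0])
        linarith only [hB, f1, f2, hu, hV0]
      subst hu1
      have hg1 : g = 1 := Nat.dvd_one.mp ⟨a * a, hu_eq⟩
      have hV20 : V ≤ 20 := by
        by_contra hc
        push_neg at hc
        have f1 : 21 * t ≤ V * t := Nat.mul_le_mul_right t (by omega)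
        have f2 : 1 * (5 * (V * t)) = 5 * (V * t) := by ring
        rw [f2] at hstar
        linarith only [hstar, f1, ht0]
      rw [hg1, hNdef] at hE4
      interval_cases V
      · -- V = 1 : the solution
        constructor
        · rw [hSs, hvV, hs_eq]
        · rw [hS's, hs_eq]
      · exact absurd hE4 (no_sq_between (r := 9) (by norm_num) (by norm_num))
      · exact absurd hE4 (no_sq_between (r := 13) (by norm_num) (by norm_num))
      · exact absurd hE4 (no_sq_between (r := 18) (by norm_num) (by norm_num))
      · exact absurd hE4 (no_sq_between (r := 22) (by norm_num) (by norm_num))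
      · exact absurd hE4 (no_sq_between (r := 27) (by norm_num) (by norm_num))
      · exact absurd hE4 (no_sq_between (r := 31) (by norm_num) (by norm_num))
      · exact absurd hE4 (no_sq_between (r := 36) (by norm_num) (by norm_num))
      · exact absurd hE4 (no_sq_between (r := 40) (by norm_num) (by norm_num))
      · exact absurd hE4 (no_sq_between (r := 45) (by norm_num) (by norm_num))
      · exact absurd hE4 (no_sq_between (r := 49) (by norm_num) (by norm_num))
      · exact absurd hE4 (no_sq_between (r := 54) (by norm_num) (by norm_num))
      · exact absurd hE4 (no_sq_between (r := 58) (by norm_num) (by norm_num))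
      · exact absurd hE4 (no_sq_between (r := 63) (by norm_num) (by norm_num))
      · exact absurd hE4 (no_sq_between (r := 67) (by norm_num) (by norm_num))
      · exact absurd hE4 (no_sq_between (r := 72) (by norm_num) (by norm_num))
      · exact absurd hE4 (no_sq_between (r := 76) (by norm_num) (by norm_num))
      · exact absurd hE4 (no_sq_between (r := 81) (by norm_num) (by norm_num))
      · exact absurd hE4 (no_sq_between (r := 85) (by norm_num) (by norm_num))
      · -- V = 20 : t = 1, z₁² = 1580 not a square
        exfalso
        have ht1 : t = 1 := by
          have f2 : 1 * (5 * (20 * t)) = 100 * t := by ring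
          rw [f2] at hstar
          omega
        subst ht1
        have hz2 : z₁ * z₁ = 1580 := by
          have e : z₁ ^ 2 = z₁ * z₁ := by ring
          obtain ⟨w1, hw1⟩ : ∃ w1, z₁ * z₁ = w1 := ⟨_, rfl⟩
          rw [e, hw1] at hE1
          omega
        rcases le_or_gt z₁ 39 with h | h
        · have := Nat.mul_le_mul h h; omega
        · have : 40 ≤ z₁ := h
          have := Nat.mul_le_mul this this; omega
    · -- s₁ = 6
      rw [val2_6] at hs1par; omega
    · -- s₁ = 7
      exfalso
      have hu1 : u = 1 := by
        by_contra hc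
        have h3 : 3 ≤ u := by rcases huodd with ⟨j, hj⟩; omega
        have f1 : 3 * (7 * V) ≤ u * (7 * V) := Nat.mul_le_mul_right _ h3
        have f2 : u * 7 ≤ u * (7 * V) := Nat.mul_le_mul_left u (by linarith only [hV0])
        linarith only [hB, f1, f2, hu, hV0]
      subst hu1
      have hg1 : g = 1 := Nat.dvd_one.mp ⟨a * a, hu_eq⟩
      have hV9 : V ≤ 9 := by
        by_contra hc
        push_neg at hc
        have f1 : 10 * t ≤ V * t := Nat.mul_le_mul_right t (by omega)
        have f2 : 1 * (7 * (V * t)) = 7 * (V * t) := by ring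
        rw [f2] at hstar
        linarith only [hstar, f1, ht0]
      rw [hg1, hNdef] at hE4
      interval_cases V
      · exact absurd hE4 (no_sq_between (r := 5) (by norm_num) (by norm_num))
      · exact absurd hE4 (no_sq_between (r := 11) (by norm_num) (by norm_num))
      · exact absurd hE4 (no_sq_between (r := 16) (by norm_num) (by norm_num))
      · exact absurd hE4 (no_sq_between (r := 21) (by norm_num) (by norm_num))
      · exact absurd hE4 (no_sq_between (r := 27) (by norm_num) (by norm_num))
      · exact absurd hE4 (no_sq_between (r := 32) (by norm_num) (by norm_num))
      · exact absurd hE4 (no_sq_between (r := 37) (by norm_num) (by norm_num))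
      · exact absurd hE4 (no_sq_between (r := 42) (by norm_num) (by norm_num))
      · exact absurd hE4 (no_sq_between (r := 48) (by norm_num) (by norm_num))
    · -- s₁ = 8
      rw [val2_8] at hs1par; omega
    · -- s₁ = 9
      exfalso
      have hu1 : u = 1 := by
        by_contra hc
        have h3 : 3 ≤ u := by rcases huodd with ⟨j, hj⟩; omega
        have f1 : 3 * (9 * V) ≤ u * (9 * V) := Nat.mul_le_mul_right _ h3
        have f2 : u * 9 ≤ u * (9 * V) := Nat.mul_le_mul_left u (by linarith only [hV0])
        linarith only [hB, f1, f2, hu, hV0]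
      subst hu1
      have hV1 : V = 1 := by omega
      have hg1 : g = 1 := Nat.dvd_one.mp ⟨a * a, hu_eq⟩
      rw [hg1, hV1, hNdef, hV1] at hE4
      exact no_sq_between (r := 6) (by norm_num) (by norm_num) hE4
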